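/- Let n ∈ ℕ, let X = (X₁, …, Xₙ) be a vector of n independent standard Gaussian random variables, and let A ⊆ ℝⁿ be a Borel set. Then the function ℓ ↦ P[(X₁ + ℓ, …, Xₙ + ℓ) ∈ A] is differentiable on ℝ and, for every ℓ ∈ ℝ: d/dℓ P[(X₁ + ℓ, …, Xₙ + ℓ) ∈ A] = Σ_{i=1}^n E[ Xᵢ · 1_{(X₁ + ℓ, …, Xₙ + ℓ) ∈ A} ]. -/

import Mathlib

open MeasureTheory ProbabilityTheory Real
open scoped ENNReal NNReal

noncomputable section

/-- The standard Gaussian measure on `ℝⁿ`: the law of a vector of `n` independent standard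
Gaussian random variables. -/
def stdGaussian (n : ℕ) : Measure (Fin n → ℝ) :=
  Measure.pi fun _ => gaussianReal 0 1

/-- **Russo's formula for i.i.d. Gaussian variables (equation (5.1)).**
Let `n ∈ ℕ`, let `X = (X₁, …, Xₙ)` be a vector of `n` independent standard Gaussian random
variables, and let `A ⊆ ℝⁿ` be a Borel set. Then the function
`ℓ ↦ P[(X₁ + ℓ, …, Xₙ + ℓ) ∈ A]` is differentiable on `ℝ` and, for every `ℓ ∈ ℝ`:
`d/dℓ P[(X₁ + ℓ, …, Xₙ + ℓ) ∈ A] = Σᵢ E[Xᵢ · 1_{(X₁ + ℓ, …, Xₙ + ℓ) ∈ A}]`. -/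
lemma lintegral_pi_prod' : ∀ (n : ℕ) (μ : Fin n → Measure ℝ), (∀ i, SigmaFinite (μ i)) →
    ∀ (f : Fin n → ℝ → ℝ≥0∞), (∀ i, Measurable (f i)) →
    ∫⁻ x, ∏ i, f i (x i) ∂Measure.pi μ = ∏ i, ∫⁻ y, f i y ∂μ i := by
  intro n
  induction n with
  | zero =>
    intro μ _ f _
    simp [lintegral_const, Measure.pi_univ]
  | succ n ih =>
    intro μ hσ f hf
    haveI := hσ
    have hP : Measurable fun x : Fin (n+1) → ℝ => ∏ i, f i (x i) :=
      Finset.measurable_prod _ fun i _ => (hf i).comp (measurable_pi_apply i)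
    have hmp := (measurePreserving_piFinSuccAbove μ 0).symm
    rw [← hmp.lintegral_comp hP]
    have : ∀ p : ℝ × (Fin n → ℝ),
        (∏ i, f i (((MeasurableEquiv.piFinSuccAbove (fun _ => ℝ) 0).symm p) i))
          = f 0 p.1 * ∏ j : Fin n, f (Fin.succ j) (p.2 j) := by
      intro p
      rw [Fin.prod_univ_succ]
      simp [MeasurableEquiv.piFinSuccAbove_symm_apply, Fin.insertNth_zero]
    simp_rw [this]
    have hg : Measurable fun y : Fin n → ℝ => ∏ j : Fin n, f (Fin.succ j) (y j) :=
      Finset.measurable_prod _ fun j _ => (hf _).comp (measurable_pi_apply j)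
    rw [lintegral_prod_mul (hf 0).aemeasurable hg.aemeasurable]
    rw [ih _ (fun j => hσ _) _ (fun j => hf _), Fin.prod_univ_succ]
    simp [Fin.succAbove]

lemma integrable_pi_prod {n : ℕ} (μ : Fin n → Measure ℝ) [hσ : ∀ i, IsFiniteMeasure (μ i)]
    (g : Fin n → ℝ → ℝ) (hm : ∀ i, Measurable (g i)) (hg : ∀ i, Integrable (g i) (μ i)) :
    Integrable (fun x : Fin n → ℝ => ∏ i, g i (x i)) (Measure.pi μ) := by
  have hPm : Measurable fun x : Fin n → ℝ => ∏ i, g i (x i) :=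
    Finset.measurable_prod _ fun i _ => (hm i).comp (measurable_pi_apply i)
  refine ⟨hPm.aestronglyMeasurable, ?_⟩
  rw [HasFiniteIntegral]
  simp only [enorm_eq_nnnorm]
  have : ∀ x : Fin n → ℝ, (‖∏ i, g i (x i)‖₊ : ℝ≥0∞) = ∏ i, (‖g i (x i)‖₊ : ℝ≥0∞) := by
    intro x
    rw [nnnorm_prod]
    push_cast
    rfl
  simp_rw [this]
  rw [lintegral_pi_prod' n μ (fun i => inferInstance) _ (fun i => (hm i).nnnorm.coe_nnreal_ennreal)]
  exact ENNReal.prod_lt_top fun i _ => (hg i).2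

lemma russo_exp_pdf (a y : ℝ) :
    rexp (a * y - a^2/2) * gaussianPDFReal 0 1 y = gaussianPDFReal a 1 y := by
  simp only [gaussianPDFReal, NNReal.coe_one, mul_one, sub_zero]
  rw [mul_left_comm, ← Real.exp_add]
  congr 2
  ring

lemma russo_int_exp (a : ℝ) : Integrable (fun y => rexp (a * y)) (gaussianReal 0 1) := by
  rw [gaussianReal_of_var_ne_zero 0 one_ne_zero,
    integrable_withDensity_iff (measurable_gaussianPDF 0 1)
      (Filter.Eventually.of_forall fun x => ENNReal.ofReal_lt_top)]
  have : (fun y => rexp (a * y) * (gaussianPDF 0 1 y).toReal)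
      = fun y => rexp (a^2/2) * gaussianPDFReal a 1 y := by
    funext y
    rw [gaussianPDF, ENNReal.toReal_ofReal (gaussianPDFReal_nonneg 0 1 y), ← russo_exp_pdf a y,
      ← mul_assoc, ← Real.exp_add]
    congr 2
    ring
  rw [this]
  exact (integrable_gaussianPDFReal a 1).const_mul _

lemma russo_int_exp_abs (a : ℝ) (ha : 0 ≤ a) :
    Integrable (fun y => rexp (a * |y|)) (gaussianReal 0 1) := by
  refine Integrable.mono' ((russo_int_exp a).add (russo_int_exp (-a)))
    (Measurable.aestronglyMeasurable (by fun_prop)) ?_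
  refine Filter.Eventually.of_forall fun y => ?_
  rw [Real.norm_eq_abs, abs_of_nonneg (Real.exp_nonneg _)]
  rcases abs_cases y with ⟨h1, h2⟩ | ⟨h1, h2⟩ <;> rw [h1]
  · exact le_add_of_nonneg_right (Real.exp_nonneg _)
  · rw [show a * -y = -a * y by ring]
    exact le_add_of_nonneg_left (Real.exp_nonneg _)

lemma setLintegral_pi_prod {n : ℕ} (μ : Fin n → Measure ℝ) [hσ : ∀ i, SigmaFinite (μ i)]
    (f : Fin n → ℝ → ℝ≥0∞) (hf : ∀ i, Measurable (f i))
    (s : Fin n → Set ℝ) (hs : ∀ i, MeasurableSet (s i)) :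
    ∫⁻ x in Set.univ.pi s, ∏ i, f i (x i) ∂Measure.pi μ = ∏ i, ∫⁻ y in s i, f i y ∂μ i := by
  rw [← lintegral_indicator (MeasurableSet.univ_pi hs) (fun x => ∏ i, f i (x i))]
  have h1 : ∀ x : Fin n → ℝ, (Set.univ.pi s).indicator (fun x => ∏ i, f i (x i)) x
      = ∏ i, (s i).indicator (f i) (x i) := by
    intro x
    by_cases hx : x ∈ Set.univ.pi s
    · rw [Set.indicator_of_mem hx]
      exact Finset.prod_congr rfl fun i _ =>
        (Set.indicator_of_mem (hx i (Set.mem_univ i)) _).symm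
    · rw [Set.indicator_of_notMem hx]
      obtain ⟨i, hi⟩ : ∃ i, x i ∉ s i := by simpa [Set.mem_pi] using hx
      exact (Finset.prod_eq_zero (Finset.mem_univ i)
        (by simp [Set.indicator_of_notMem hi])).symm
  simp_rw [h1]
  rw [lintegral_pi_prod' n μ hσ _ (fun i => (hf i).indicator (hs i))]
  exact Finset.prod_congr rfl fun i _ => lintegral_indicator (hs i) (f i)

lemma russo_1d_density (t : ℝ) {s : Set ℝ} (hs : MeasurableSet s) :
    gaussianReal t 1 s = ∫⁻ y in s, ENNReal.ofReal (rexp (t * y - t^2/2)) ∂gaussianReal 0 1 := by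
  rw [gaussianReal_of_var_ne_zero 0 one_ne_zero, gaussianReal_of_var_ne_zero t one_ne_zero,
    withDensity_apply _ hs, restrict_withDensity hs,
    lintegral_withDensity_eq_lintegral_mul _ (measurable_gaussianPDF 0 1)
      (by fun_prop)]
  refine setLIntegral_congr_fun hs (fun y _ => ?_)
  simp only [gaussianPDF, Pi.mul_apply]
  rw [← ENNReal.ofReal_mul (gaussianPDFReal_nonneg 0 1 y), mul_comm, russo_exp_pdf t y]

lemma russo_measurable_shift (n : ℕ) (t : ℝ) :
    Measurable (fun (x : Fin n → ℝ) (i : Fin n) => x i + t) :=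
  measurable_pi_lambda _ fun i => by fun_prop

lemma russo_map (n : ℕ) (t : ℝ) :
    (stdGaussian n).map (fun x i => x i + t) = Measure.pi (fun _ : Fin n => gaussianReal t 1) := by
  refine (Measure.pi_eq fun s hs => ?_).symm
  rw [Measure.map_apply (russo_measurable_shift n t) (MeasurableSet.univ_pi hs)]
  have : (fun (x : Fin n → ℝ) (i : Fin n) => x i + t) ⁻¹' Set.univ.pi s
      = Set.univ.pi fun i => (· + t) ⁻¹' s i := by
    ext x; simp [Set.mem_pi]
  rw [this, _root_.stdGaussian, Measure.pi_pi]
  refine Finset.prod_congr rfl fun i _ => ?_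
  rw [← Measure.map_apply (measurable_id'.add_const t) (hs i), gaussianReal_map_add_const t,
    zero_add]

lemma russo_prod_exp (n : ℕ) (t : ℝ) (x : Fin n → ℝ) :
    ∏ i, rexp (t * x i - t^2/2) = rexp (t * (∑ i, x i) - n * (t^2/2)) := by
  rw [← Real.exp_sum]
  congr 1
  rw [Finset.sum_sub_distrib, ← Finset.mul_sum, Finset.sum_const, Finset.card_univ,
    Fintype.card_fin, nsmul_eq_mul]

lemma russo_pi_density (n : ℕ) (t : ℝ) :
    Measure.pi (fun _ : Fin n => gaussianReal t 1)
      = (stdGaussian n).withDensity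
          (fun x => ENNReal.ofReal (rexp (t * (∑ i, x i) - n * (t^2/2)))) := by
  refine Measure.pi_eq fun s hs => ?_
  rw [withDensity_apply _ (MeasurableSet.univ_pi hs)]
  have h1 : ∀ x : Fin n → ℝ, ENNReal.ofReal (rexp (t * (∑ i, x i) - n * (t^2/2)))
      = ∏ i, ENNReal.ofReal (rexp (t * x i - t^2/2)) := by
    intro x
    rw [← ENNReal.ofReal_prod_of_nonneg (fun i _ => Real.exp_nonneg _), russo_prod_exp]
  simp_rw [h1]
  rw [show stdGaussian n = Measure.pi fun _ => gaussianReal 0 1 from rfl,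
    setLintegral_pi_prod (fun _ => gaussianReal 0 1)
      (fun _ y => ENNReal.ofReal (rexp (t * y - t^2/2))) (fun i => by fun_prop) s hs]
  exact Finset.prod_congr rfl fun i _ => (russo_1d_density t (hs i)).symm

lemma russo_cov (n : ℕ) (t : ℝ) (g : (Fin n → ℝ) → ℝ) (hg : Measurable g) :
    ∫ x, g (fun i => x i + t) ∂stdGaussian n
      = ∫ x, rexp (t * (∑ i, x i) - n * (t^2/2)) * g x ∂stdGaussian n := by
  rw [← integral_map (russo_measurable_shift n t).aemeasurable hg.aestronglyMeasurable,
    russo_map, russo_pi_density]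
  have h0 : ((stdGaussian n).withDensity
        fun x => ENNReal.ofReal (rexp (t * (∑ i, x i) - n * (t^2/2))))
      = (stdGaussian n).withDensity
        fun x => ((rexp (t * (∑ i, x i) - n * (t^2/2))).toNNReal : ℝ≥0∞) := rfl
  rw [h0, integral_withDensity_eq_integral_smul (by fun_prop) g]
  refine integral_congr_ae (Filter.Eventually.of_forall fun x => ?_)
  simp only [NNReal.smul_def, Real.coe_toNNReal _ (Real.exp_nonneg _), smul_eq_mul]

lemma russo_P (n : ℕ) (A : Set (Fin n → ℝ)) (hA : MeasurableSet A) (t : ℝ) :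
    ((stdGaussian n) {x | (fun i => x i + t) ∈ A}).toReal
      = ∫ x, Set.indicator A (fun _ => (1:ℝ)) x * rexp (t * (∑ i, x i) - n * (t^2/2))
          ∂stdGaussian n := by
  have h1 : {x : Fin n → ℝ | (fun i => x i + t) ∈ A} = (fun x i => x i + t) ⁻¹' A := rfl
  rw [h1, ← Measure.map_apply (russo_measurable_shift n t) hA, russo_map, russo_pi_density,
    withDensity_apply _ hA]
  rw [← integral_eq_lintegral_of_nonneg_ae
    (Filter.Eventually.of_forall fun x => Real.exp_nonneg _)
    (Measurable.aestronglyMeasurable (by fun_prop))]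
  rw [← integral_indicator hA]
  refine integral_congr_ae (Filter.Eventually.of_forall fun x => ?_)
  by_cases hx : x ∈ A <;> simp [hx]

theorem gaussian_russo_formula
    (n : ℕ) (A : Set (Fin n → ℝ)) (hA : MeasurableSet A) (ℓ : ℝ) :
    HasDerivAt
      (fun t : ℝ => ((stdGaussian n) {x | (fun i => x i + t) ∈ A}).toReal)
      (∑ i : Fin n,
        ∫ x, x i * Set.indicator A (fun _ => (1 : ℝ)) (fun j => x j + ℓ) ∂(stdGaussian n))
      ℓ := by
  classical
  set μ := stdGaussian n
  set c : ℝ := |ℓ| + 1 with hc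
  have hc0 : 0 ≤ c := by positivity
  have hc1 : 1 ≤ c := by rw [hc]; linarith [abs_nonneg ℓ]
  set S : (Fin n → ℝ) → ℝ := fun x => ∑ i, x i with hS
  set ind : (Fin n → ℝ) → ℝ := Set.indicator A (fun _ => (1:ℝ)) with hind
  have hind_meas : Measurable ind := Measurable.indicator measurable_const hA
  have hind_le : ∀ x, |ind x| ≤ 1 := by
    intro x
    by_cases hx : x ∈ A <;> simp [hind, hx]
  have hS_meas : Measurable S := by fun_prop
  set F : ℝ → (Fin n → ℝ) → ℝ := fun t x => ind x * rexp (t * S x - n * (t^2/2)) with hF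
  set F' : ℝ → (Fin n → ℝ) → ℝ :=
    fun t x => ind x * (rexp (t * S x - n * (t^2/2)) * (S x - n * t)) with hF'
  set G : (Fin n → ℝ) → ℝ := fun x => ∏ i, rexp ((c+1) * |x i|) with hG
  have hG_eq : ∀ x, G x = rexp ((c+1) * ∑ i, |x i|) := by
    intro x
    rw [hG, Finset.mul_sum, Real.exp_sum]
  have hGe : ∀ (x : Fin n → ℝ) (a : ℝ), 0 ≤ a → a ≤ c + 1 → rexp (a * |S x|) ≤ G x := by
    intro x a ha hac
    rw [hG_eq]
    refine Real.exp_le_exp.2 ?_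
    calc a * |S x| ≤ a * ∑ i, |x i| :=
          mul_le_mul_of_nonneg_left (Finset.abs_sum_le_sum_abs _ _) ha
      _ ≤ (c+1) * ∑ i, |x i| :=
          mul_le_mul_of_nonneg_right hac (Finset.sum_nonneg fun i _ => abs_nonneg _)
  have hG_nonneg : ∀ x, 0 ≤ G x := fun x => by rw [hG_eq]; positivity
  have hρ_le : ∀ t : ℝ, |t| ≤ c → ∀ x, rexp (t * S x - n * (t^2/2)) ≤ G x := by
    intro t ht x
    refine le_trans ?_ (hGe x c hc0 (by linarith))
    refine Real.exp_le_exp.2 ?_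
    have h1 : t * S x ≤ |t| * |S x| := le_trans (le_abs_self _) (by rw [abs_mul])
    have h2 : 0 ≤ (n : ℝ) * (t^2/2) := by positivity
    nlinarith [abs_nonneg (S x)]
  have hG_int : Integrable G μ := by
    refine integrable_pi_prod _ (fun _ y => rexp ((c+1) * |y|)) (fun i => by fun_prop)
      (fun i => russo_int_exp_abs (c+1) (by positivity))
  have hF_meas : ∀ t : ℝ, Measurable (F t) := by
    intro t
    exact hind_meas.mul (by fun_prop)
  have hF'_meas : ∀ t : ℝ, Measurable (F' t) := by
    intro t
    exact hind_meas.mul (by fun_prop)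
  -- bound for F'
  have h_bound : ∀ t : ℝ, |t| ≤ c → ∀ x, ‖F' t x‖ ≤ (1 + n * c) * G x := by
    intro t ht x
    rw [Real.norm_eq_abs, hF']
    have e1 : |ind x * (rexp (t * S x - n * (t^2/2)) * (S x - n * t))|
        ≤ rexp (t * S x - n * (t^2/2)) * (|S x| + n * c) := by
      rw [abs_mul, abs_mul, abs_of_nonneg (Real.exp_nonneg _)]
      have : |S x - n * t| ≤ |S x| + n * c := by
        refine (abs_sub _ _).trans ?_
        have : |(n : ℝ) * t| ≤ n * c := by
          rw [abs_mul, abs_of_nonneg (by positivity : (0:ℝ) ≤ (n:ℝ))]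
          exact mul_le_mul_of_nonneg_left ht (by positivity)
        linarith
      calc |ind x| * (rexp (t * S x - n * (t^2/2)) * |S x - n * t|)
          ≤ 1 * (rexp (t * S x - n * (t^2/2)) * (|S x| + n * c)) := by
            refine mul_le_mul (hind_le x) ?_ (by positivity) zero_le_one
            exact mul_le_mul_of_nonneg_left this (Real.exp_nonneg _)
        _ = rexp (t * S x - n * (t^2/2)) * (|S x| + n * c) := one_mul _
    refine e1.trans ?_
    have e2 : |S x| + n * c ≤ (1 + n * c) * rexp (|S x|) := by
      have h3 : |S x| + 1 ≤ rexp (|S x|) := Real.add_one_le_exp (|S x|)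
      have h4 : (1 + (n:ℝ) * c) * (|S x| + 1) ≤ (1 + n * c) * rexp (|S x|) :=
        mul_le_mul_of_nonneg_left h3 (by positivity)
      nlinarith [mul_nonneg (mul_nonneg (Nat.cast_nonneg n : (0:ℝ) ≤ n) hc0) (abs_nonneg (S x))]
    have e3 : rexp (t * S x - n * (t^2/2)) ≤ rexp (c * |S x|) := by
      refine Real.exp_le_exp.2 ?_
      have h1 : t * S x ≤ |t| * |S x| := le_trans (le_abs_self _) (by rw [abs_mul])
      have h2 : 0 ≤ (n : ℝ) * (t^2/2) := by positivity
      nlinarith [abs_nonneg (S x)]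
    calc rexp (t * S x - n * (t^2/2)) * (|S x| + n * c)
        ≤ rexp (c * |S x|) * ((1 + n * c) * rexp (|S x|)) := by
          refine mul_le_mul e3 e2 (by positivity) (Real.exp_nonneg _)
      _ = (1 + n * c) * rexp ((c + 1) * |S x|) := by
          rw [mul_left_comm, ← Real.exp_add]
          ring_nf
      _ ≤ (1 + n * c) * G x := by
          refine mul_le_mul_of_nonneg_left (hGe x (c+1) (by positivity) le_rfl) (by positivity)
  -- differentiability in t
  have h_deriv : ∀ (x : Fin n → ℝ) (t : ℝ), HasDerivAt (fun s => F s x) (F' t x) t := by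
    intro x t
    have hu : HasDerivAt (fun s : ℝ => s * S x - n * (s^2/2)) (S x - n * t) t := by
      have h1 : HasDerivAt (fun s : ℝ => s * S x) (S x) t := by
        simpa using (hasDerivAt_id t).mul_const (S x)
      have h2 : HasDerivAt (fun s : ℝ => (n : ℝ) * (s^2/2)) ((n : ℝ) * t) t := by
        have := (hasDerivAt_pow 2 t).const_mul ((n : ℝ) / 2)
        rw [show (fun s : ℝ => (n : ℝ) * (s^2/2)) = fun y => (n : ℝ) / 2 * y ^ 2 by funext s; ring,
          show (n : ℝ) * t = (n : ℝ) / 2 * ((2 : ℕ) * t ^ (2 - 1)) by push_cast; ring]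
        exact this
      exact h1.sub h2
    exact (hu.exp.const_mul (ind x))
  -- apply dominated differentiation
  have hball : ∀ t : ℝ, t ∈ Metric.ball ℓ 1 → |t| ≤ c := by
    intro t ht
    rw [Metric.mem_ball, Real.dist_eq] at ht
    rw [hc]
    cases abs_cases (t - ℓ) <;> cases abs_cases ℓ <;> cases abs_cases t <;> linarith
  have hFl_int : Integrable (F ℓ) μ := by
    refine Integrable.mono' (hG_int.const_mul (1 + n * c))
      (hF_meas ℓ).aestronglyMeasurable (Filter.Eventually.of_forall fun x => ?_)
    rw [Real.norm_eq_abs, hF, abs_mul, abs_of_nonneg (Real.exp_nonneg _)]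
    calc |ind x| * rexp (ℓ * S x - n * (ℓ^2/2))
        ≤ 1 * G x := by
          refine mul_le_mul (hind_le x) (hρ_le ℓ (by rw [hc]; linarith [abs_nonneg ℓ]) x)
            (Real.exp_nonneg _) zero_le_one
      _ ≤ (1 + n * c) * G x := by
          refine mul_le_mul_of_nonneg_right ?_ (hG_nonneg x)
          have : (0:ℝ) ≤ n * c := by positivity
          linarith
  have key := hasDerivAt_integral_of_dominated_loc_of_deriv_le (F := F) (F' := F')
    (μ := μ) (bound := fun x => (1 + n * c) * G x) (x₀ := ℓ) (Metric.ball_mem_nhds ℓ one_pos)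
    (Filter.Eventually.of_forall fun t => (hF_meas t).aestronglyMeasurable)
    hFl_int ((hF'_meas ℓ).aestronglyMeasurable)
    (Filter.Eventually.of_forall fun x t ht => h_bound t (hball t ht) x)
    (hG_int.const_mul _)
    (Filter.Eventually.of_forall fun x t _ => h_deriv x t)
  obtain ⟨hF'_int, hderiv⟩ := key
  -- identify the function
  have hfun : (fun t : ℝ => ((stdGaussian n) {x | (fun i => x i + t) ∈ A}).toReal)
      = fun t => ∫ x, F t x ∂μ := by
    funext t
    exact russo_P n A hA t
  rw [hfun]
  -- identify the derivative
  have h_sum : ∀ x, F' ℓ x = ∑ i, ind x * (rexp (ℓ * S x - n * (ℓ^2/2)) * (x i - ℓ)) := by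
    intro x
    have hsub : S x - n * ℓ = ∑ i, (x i - ℓ) := by
      rw [Finset.sum_sub_distrib, Finset.sum_const, Finset.card_univ, Fintype.card_fin,
        nsmul_eq_mul, hS]
    simp only [hF']
    rw [hsub, Finset.mul_sum, Finset.mul_sum]
  have h_term_int : ∀ i : Fin n,
      Integrable (fun x => ind x * (rexp (ℓ * S x - n * (ℓ^2/2)) * (x i - ℓ))) μ := by
    intro i
    refine Integrable.mono' (hG_int.const_mul (1 + c))
      (Measurable.aestronglyMeasurable (by exact (hind_meas.mul (by fun_prop))))
      (Filter.Eventually.of_forall fun x => ?_)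
    rw [Real.norm_eq_abs, abs_mul, abs_mul, abs_of_nonneg (Real.exp_nonneg _)]
    have e1 : |x i - ℓ| ≤ (1 + c) * rexp (|x i|) := by
      have h3 : |x i| + 1 ≤ rexp (|x i|) := Real.add_one_le_exp _
      have h4 : |x i - ℓ| ≤ |x i| + c := by
        refine (abs_sub _ _).trans ?_
        rw [hc]; linarith
      nlinarith [abs_nonneg (x i), Real.exp_nonneg (|x i|)]
    have e2 : rexp (ℓ * S x - n * (ℓ^2/2)) ≤ rexp (c * |S x|) := by
      refine Real.exp_le_exp.2 ?_
      have h1 : ℓ * S x ≤ |ℓ| * |S x| := le_trans (le_abs_self _) (by rw [abs_mul])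
      have h2 : 0 ≤ (n : ℝ) * (ℓ^2/2) := by positivity
      have h5 : |ℓ| ≤ c := by rw [hc]; linarith
      nlinarith [abs_nonneg (S x)]
    have e3 : rexp (c * |S x|) * rexp (|x i|) ≤ G x := by
      rw [← Real.exp_add, hG_eq]
      refine Real.exp_le_exp.2 ?_
      have h6 : |S x| ≤ ∑ j, |x j| := Finset.abs_sum_le_sum_abs _ _
      have h7 : |x i| ≤ ∑ j, |x j| :=
        Finset.single_le_sum (fun j _ => abs_nonneg (x j)) (Finset.mem_univ i)
      nlinarith [Finset.sum_nonneg (fun j (_ : j ∈ Finset.univ) => abs_nonneg (x j))]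
    calc |ind x| * (rexp (ℓ * S x - n * (ℓ^2/2)) * |x i - ℓ|)
        ≤ 1 * (rexp (c * |S x|) * ((1 + c) * rexp (|x i|))) := by
          refine mul_le_mul (hind_le x) ?_ (by positivity) zero_le_one
          exact mul_le_mul e2 e1 (abs_nonneg _) (Real.exp_nonneg _)
      _ = (1 + c) * (rexp (c * |S x|) * rexp (|x i|)) := by ring
      _ ≤ (1 + c) * G x := by
          refine mul_le_mul_of_nonneg_left e3 (by positivity)
  have h_int_eq : ∫ x, F' ℓ x ∂μ
      = ∑ i, ∫ x, ind x * (rexp (ℓ * S x - n * (ℓ^2/2)) * (x i - ℓ)) ∂μ := by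
    simp_rw [h_sum]
    exact integral_finset_sum _ (fun i _ => h_term_int i)
  have h_cov_i : ∀ i : Fin n,
      ∫ x, ind x * (rexp (ℓ * S x - n * (ℓ^2/2)) * (x i - ℓ)) ∂μ
        = ∫ x, x i * ind (fun j => x j + ℓ) ∂μ := by
    intro i
    have hg : Measurable fun y : Fin n → ℝ => (y i - ℓ) * ind y :=
      ((measurable_pi_apply i).sub_const ℓ).mul hind_meas
    have h1 := russo_cov n ℓ (fun y => (y i - ℓ) * ind y) hg
    have h2 : ∀ x : Fin n → ℝ, ((fun j => x j + ℓ) i - ℓ) * ind (fun j => x j + ℓ)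
        = x i * ind (fun j => x j + ℓ) := by
      intro x
      congr 1
      ring
    calc ∫ x, ind x * (rexp (ℓ * S x - n * (ℓ^2/2)) * (x i - ℓ)) ∂μ
        = ∫ x, rexp (ℓ * S x - n * (ℓ^2/2)) * ((x i - ℓ) * ind x) ∂μ := by
          refine integral_congr_ae (Filter.Eventually.of_forall fun x => ?_)
          ring
      _ = ∫ x, ((fun j => x j + ℓ) i - ℓ) * ind (fun j => x j + ℓ) ∂μ := h1.symm
      _ = ∫ x, x i * ind (fun j => x j + ℓ) ∂μ := by
          refine integral_congr_ae (Filter.Eventually.of_forall fun x => ?_)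
          exact h2 x
  have hfinal : ∫ x, F' ℓ x ∂μ
      = ∑ i : Fin n, ∫ x, x i * Set.indicator A (fun _ => (1 : ℝ)) (fun j => x j + ℓ) ∂μ := by
    rw [h_int_eq]
    exact Finset.sum_congr rfl fun i _ => h_cov_i i
  rw [← hfinal]
  exact hderiv


end
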